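/- For nonnegative integers n, k with n ≤ 2^k, D(2^(k+2) − n − 1) = 2^(k+1) − 4n + D(2^(k+1) + 2^k + n − 1). -/

import Mathlib

/-- f m = (#1 digits) - (#0 digits) in the binary expansion of m. -/
def f (m : ℕ) : ℤ :=
  2 * ((Nat.digits 2 m).count 1 : ℤ) - ((Nat.digits 2 m).length : ℤ)

/-- Cumulated deficient binary digit sum (OEIS A268289), D 0 = 0. -/
def D (n : ℕ) : ℤ := ∑ m ∈ Finset.Icc 1 n, f m

lemma f_even (m : ℕ) (hm : 0 < m) : f (2 * m) = f m - 1 := by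
  unfold f
  rw [Nat.digits_def' (by norm_num : 1 < 2) (by omega)]
  have h1 : 2 * m % 2 = 0 := by omega
  have h2 : 2 * m / 2 = m := by omega
  rw [h1, h2]
  simp [List.count_cons]
  ring

lemma f_odd (m : ℕ) (hm : 0 < m) : f (2 * m + 1) = f m + 1 := by
  unfold f
  rw [Nat.digits_def' (by norm_num : 1 < 2) (by omega)]
  have h1 : (2 * m + 1) % 2 = 1 := by omega
  have h2 : (2 * m + 1) / 2 = m := by omega
  rw [h1, h2]
  simp [List.count_cons]
  ring

lemma pair : ∀ k : ℕ, ∀ j : ℕ, j < 2 ^ k →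
    f (3 * 2 ^ k + j) + f (3 * 2 ^ k + (2 ^ k - 1 - j)) = 4 := by
  intro k
  induction k with
  | zero =>
    intro j hj
    interval_cases j
    have h1 : f 1 = 1 := by
      unfold f
      rw [Nat.digits_def' (by norm_num : 1 < 2) one_pos]
      norm_num
    have h3 : f 3 = 2 := by
      have : (3:ℕ) = 2 * 1 + 1 := rfl
      rw [this, f_odd 1 one_pos, h1]; norm_num
    norm_num [h3]
  | succ k ih =>
    intro j hj
    have hpow : 0 < 2 ^ k := Nat.pow_pos (by norm_num)
    set q := j / 2 with hq
    have hqlt : q < 2 ^ k := by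
      have : j < 2 * 2 ^ k := by rw [pow_succ] at hj; omega
      omega
    have hA : (0:ℕ) < 3 * 2 ^ k + q := by positivity
    have hB : (0:ℕ) < 3 * 2 ^ k + (2 ^ k - 1 - q) := by positivity
    have key := ih q hqlt
    rcases Nat.even_or_odd j with ⟨r, hr⟩ | ⟨r, hr⟩
    · -- j = 2q
      have hj2 : j = 2 * q := by omega
      have e1 : 3 * 2 ^ (k+1) + j = 2 * (3 * 2 ^ k + q) := by rw [pow_succ]; omega
      have e2 : 3 * 2 ^ (k+1) + (2 ^ (k+1) - 1 - j) =
          2 * (3 * 2 ^ k + (2 ^ k - 1 - q)) + 1 := by rw [pow_succ]; omega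
      rw [e1, e2, f_even _ hA, f_odd _ hB]
      linarith
    · -- j = 2q+1
      have hj2 : j = 2 * q + 1 := by omega
      have e1 : 3 * 2 ^ (k+1) + j = 2 * (3 * 2 ^ k + q) + 1 := by rw [pow_succ]; omega
      have e2 : 3 * 2 ^ (k+1) + (2 ^ (k+1) - 1 - j) =
          2 * (3 * 2 ^ k + (2 ^ k - 1 - q)) := by rw [pow_succ]; omega
      rw [e1, e2, f_odd _ hA, f_even _ hB]
      linarith

lemma D_succ (n : ℕ) : D (n + 1) = D n + f (n + 1) := by
  unfold D
  rw [Finset.sum_Icc_succ_top (by omega : 1 ≤ n + 1)]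

lemma D_add (a m : ℕ) : D (a + m) = D a + ∑ i ∈ Finset.range m, f (a + 1 + i) := by
  induction m with
  | zero => simp
  | succ m ih =>
    rw [← Nat.add_assoc, D_succ, ih, Finset.sum_range_succ,
      show a + m + 1 = a + 1 + m from by ring]
    ring

noncomputable def S (k m : ℕ) : ℤ := ∑ i ∈ Finset.range m, f (3 * 2 ^ k + i)

lemma S_full (k : ℕ) : S k (2 ^ k) = 2 ^ (k + 1) := by
  have h1 : ∑ i ∈ Finset.range (2 ^ k),
      (f (3 * 2 ^ k + i) + f (3 * 2 ^ k + (2 ^ k - 1 - i))) = 4 * 2 ^ k := by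
    rw [Finset.sum_congr rfl (fun i hi => pair k i (Finset.mem_range.mp hi))]
    simp [mul_comm]
  have h2 : ∑ i ∈ Finset.range (2 ^ k), f (3 * 2 ^ k + (2 ^ k - 1 - i)) = S k (2 ^ k) := by
    exact Finset.sum_range_reflect (fun i => f (3 * 2 ^ k + i)) (2 ^ k)
  rw [Finset.sum_add_distrib, h2] at h1
  unfold S at *
  have hp : (2:ℤ) ^ (k + 1) = 2 ^ k * 2 := pow_succ 2 k
  linarith

lemma S_sym (k n : ℕ) (h : n ≤ 2 ^ k) :
    S k (2 ^ k - n) = 2 ^ (k + 1) - 4 * n + S k n := by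
  have hsplit : S k (2 ^ k) = S k n + ∑ i ∈ Finset.range (2 ^ k - n), f (3 * 2 ^ k + (n + i)) := by
    unfold S
    rw [show 2 ^ k = n + (2 ^ k - n) by omega, Finset.sum_range_add]
    simp [add_assoc]
  have hrefl : ∑ i ∈ Finset.range (2 ^ k - n), f (3 * 2 ^ k + (n + i)) =
      ∑ i ∈ Finset.range (2 ^ k - n), f (3 * 2 ^ k + (n + (2 ^ k - n - 1 - i))) :=
    (Finset.sum_range_reflect (fun i => f (3 * 2 ^ k + (n + i))) (2 ^ k - n)).symm
  have hcong : ∑ i ∈ Finset.range (2 ^ k - n), f (3 * 2 ^ k + (n + (2 ^ k - n - 1 - i))) =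
      ∑ i ∈ Finset.range (2 ^ k - n), (4 - f (3 * 2 ^ k + i)) := by
    apply Finset.sum_congr rfl
    intro i hi
    have hi' : i < 2 ^ k - n := Finset.mem_range.mp hi
    have h1 : n + (2 ^ k - n - 1 - i) = 2 ^ k - 1 - i := by omega
    have := pair k i (by omega)
    rw [h1]
    linarith
  have hsum4 : ∑ i ∈ Finset.range (2 ^ k - n), (4 - f (3 * 2 ^ k + i)) =
      4 * ((2 ^ k : ℤ) - n) - S k (2 ^ k - n) := by
    rw [Finset.sum_sub_distrib]
    unfold S
    simp
    push_cast [h]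
    ring
  have hfull := S_full k
  rw [hsplit, hrefl, hcong, hsum4] at hfull
  have hpow : ((2:ℤ) ^ (k + 1)) = 2 * 2 ^ k := by ring
  linarith

theorem stmt_11 (n k : ℕ) (h : n ≤ 2 ^ k) :
    D (2 ^ (k + 2) - n - 1) = 2 ^ (k + 1) - 4 * n + D (2 ^ (k + 1) + 2 ^ k + n - 1) := by
  have hpow : 0 < 2 ^ k := Nat.pow_pos (by norm_num)
  have e1 : 2 ^ (k + 2) - n - 1 = (3 * 2 ^ k - 1) + (2 ^ k - n) := by
    have : 2 ^ (k + 2) = 4 * 2 ^ k := by ring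
    omega
  have e2 : 2 ^ (k + 1) + 2 ^ k + n - 1 = (3 * 2 ^ k - 1) + n := by
    have : 2 ^ (k + 1) = 2 * 2 ^ k := by ring
    omega
  have eB : 3 * 2 ^ k - 1 + 1 = 3 * 2 ^ k := by omega
  have hD1 : D (2 ^ (k + 2) - n - 1) = D (3 * 2 ^ k - 1) + S k (2 ^ k - n) := by
    rw [e1, D_add]
    unfold S
    congr 1
    apply Finset.sum_congr rfl
    intro i _
    congr 1
    omega
  have hD2 : D (2 ^ (k + 1) + 2 ^ k + n - 1) = D (3 * 2 ^ k - 1) + S k n := by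
    rw [e2, D_add]
    unfold S
    congr 1
    apply Finset.sum_congr rfl
    intro i _
    congr 1
    omega
  rw [hD1, hD2, S_sym k n h]
  ring
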